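/- Let T be a linear nonexpansive operator on a real Hilbert space X that is the proximal gradient operator of a convex β-smooth f and proper lsc convex g with Argmin(f+g) ≠ ∅. Then the FISTA sequences (x_n), (y_n) with starting point x_0 converge strongly: x_n → P_{Fix T} x_0 and y_n → P_{Fix T} x_0. -/

import Mathlib

open Filter

local notation "⟪" x ", " y "⟫" => @inner ℝ _ _ x y

section FistaAux

variable {X : Type*} [NormedAddCommGroup X] [InnerProductSpace ℝ X] [CompleteSpace X]

omit [InnerProductSpace ℝ X] [CompleteSpace X] in
private lemma fista_lip_norm {β : ℝ} (hβ : 0 < β) {f' : X → X}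
    (hflip : LipschitzWith β.toNNReal f')
    (a b : X) : ‖f' a - f' b‖ ≤ β * ‖a - b‖ := by
  have := hflip.dist_le_mul a b
  rwa [dist_eq_norm, dist_eq_norm, Real.coe_toNNReal _ hβ.le] at this

private lemma fista_line_hasDerivAt {f : X → ℝ} {f' : X → X}
    (hfgrad : ∀ x, HasGradientAt f (f' x) x) (a d : X) (s : ℝ) :
    HasDerivAt (fun r : ℝ => f (a + r • d)) ⟪f' (a + s • d), d⟫ s := by
  have h1 : HasDerivAt (fun r : ℝ => a + r • d) d s := by
    simpa using ((hasDerivAt_id s).smul_const d).const_add a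
  have h2 := (hfgrad (a + s • d)).hasFDerivAt
  have h3 := h2.comp_hasDerivAt s h1
  simpa [InnerProductSpace.toDual_apply_apply, Function.comp_def] using h3

/-- Descent lemma for `β`-smooth functions. -/
private lemma fista_descent {β : ℝ} (hβ : 0 < β) {f : X → ℝ} {f' : X → X}
    (hfgrad : ∀ x, HasGradientAt f (f' x) x) (hflip : LipschitzWith β.toNNReal f')
    (a b : X) : f b ≤ f a + ⟪f' a, b - a⟫ + β / 2 * ‖b - a‖ ^ 2 := by
  set d := b - a with hd
  set ψ : ℝ → ℝ := fun s => f (a + s • d) - s * ⟪f' a, d⟫ - β / 2 * s ^ 2 * ‖d‖ ^ 2 with hψ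
  have hψd : ∀ s : ℝ, HasDerivAt ψ
      (⟪f' (a + s • d), d⟫ - ⟪f' a, d⟫ - β / 2 * (2 * s) * ‖d‖ ^ 2) s := by
    intro s
    have h1 := fista_line_hasDerivAt hfgrad a d s
    have h2 : HasDerivAt (fun s : ℝ => s * ⟪f' a, d⟫) ⟪f' a, d⟫ s := by
      simpa using (hasDerivAt_id s).mul_const (⟪f' a, d⟫)
    have h3 : HasDerivAt (fun s : ℝ => β / 2 * s ^ 2 * ‖d‖ ^ 2) (β / 2 * (2 * s) * ‖d‖ ^ 2) s := by
      have h' := ((hasDerivAt_pow 2 s).const_mul (β / 2)).mul_const (‖d‖ ^ 2)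
      simpa using h'
    exact (h1.sub h2).sub h3
  have key : ψ 1 ≤ ψ 0 := by
    have hmono : AntitoneOn ψ (Set.Icc 0 1) := by
      apply antitoneOn_of_deriv_nonpos (convex_Icc 0 1)
      · exact fun s _ => ((hψd s).differentiableAt).continuousAt.continuousWithinAt
      · exact fun s _ => ((hψd s).differentiableAt).differentiableWithinAt
      · intro s hs
        rw [(hψd s).deriv]
        rw [interior_Icc] at hs
        have hlip : ⟪f' (a + s • d) - f' a, d⟫ ≤ β * s * ‖d‖ ^ 2 := by
          calc ⟪f' (a + s • d) - f' a, d⟫ ≤ ‖f' (a + s • d) - f' a‖ * ‖d‖ :=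
                real_inner_le_norm _ _
            _ ≤ (β * ‖(a + s • d) - a‖) * ‖d‖ := by
                have := fista_lip_norm hβ hflip (a + s • d) a
                exact mul_le_mul_of_nonneg_right this (norm_nonneg d)
            _ = β * s * ‖d‖ ^ 2 := by
                rw [add_sub_cancel_left, norm_smul, Real.norm_eq_abs, abs_of_pos hs.1]
                ring
        have : ⟪f' (a + s • d), d⟫ - ⟪f' a, d⟫ ≤ β * s * ‖d‖ ^ 2 := by
          rw [← inner_sub_left]; exact hlip
        nlinarith [this]
    exact hmono (Set.mem_Icc.2 ⟨le_refl 0, zero_le_one⟩)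
      (Set.mem_Icc.2 ⟨zero_le_one, le_refl 1⟩) zero_le_one
  have h0 : ψ 0 = f a := by simp [hψ]
  have h1 : ψ 1 = f b - ⟪f' a, d⟫ - β / 2 * ‖d‖ ^ 2 := by simp [hψ, hd]
  rw [h0, h1] at key
  linarith

/-- Gradient inequality for convex functions. -/
private lemma fista_cvx_grad {f : X → ℝ} {f' : X → X} (hfconv : ConvexOn ℝ Set.univ f)
    (hfgrad : ∀ x, HasGradientAt f (f' x) x) (a b : X) :
    f a + ⟪f' a, b - a⟫ ≤ f b := by
  set d := b - a with hd
  have hder : HasDerivAt (fun r : ℝ => f (a + r • d)) ⟪f' a, d⟫ 0 := by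
    simpa using fista_line_hasDerivAt hfgrad a d 0
  have hslope := hasDerivAt_iff_tendsto_slope.1 hder
  have hslope' : Tendsto (slope (fun r : ℝ => f (a + r • d)) 0)
      (nhdsWithin 0 (Set.Ioi 0)) (nhds ⟪f' a, d⟫) :=
    hslope.mono_left (nhdsWithin_mono 0 (fun s hs => ne_of_gt hs))
  have hbound : ∀ᶠ s in nhdsWithin (0:ℝ) (Set.Ioi 0),
      slope (fun r : ℝ => f (a + r • d)) 0 s ≤ f b - f a := by
    filter_upwards [Ioo_mem_nhdsGT_of_mem (Set.left_mem_Ico.2 zero_lt_one)] with s hs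
    have hs0 : (0:ℝ) < s := hs.1
    have hs1 : s < 1 := hs.2
    have hcvx := hfconv.2 (Set.mem_univ a) (Set.mem_univ b)
      (show (0:ℝ) ≤ 1 - s by linarith) hs0.le (by ring)
    have hpt : (1 - s) • a + s • b = a + s • d := by
      rw [hd]; module
    rw [hpt] at hcvx
    have : f (a + s • d) - f a ≤ s * (f b - f a) := by
      have := hcvx
      simp only [smul_eq_mul] at this
      nlinarith
    rw [slope_def_field]
    simp only [zero_smul, add_zero, sub_zero]
    rw [div_le_iff₀ hs0]
    nlinarith [this]
  have := le_of_tendsto hslope' hbound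
  linarith

variable {β : ℝ} {f : X → ℝ} {f' : X → X} {g : X → EReal} {T : X →L[ℝ] X}

omit [CompleteSpace X] in
private lemma fista_gfin (hg_proper : ∃ x, g x ≠ ⊤)
    (hTprox : ∀ x z : X,
      g (T x) + (((β / 2) * ‖T x - (x - (1 / β) • f' x)‖ ^ 2 : ℝ) : EReal)
        ≤ g z + (((β / 2) * ‖z - (x - (1 / β) • f' x)‖ ^ 2 : ℝ) : EReal))
    (x : X) : g (T x) ≠ ⊤ := by
  obtain ⟨z₀, hz₀⟩ := hg_proper
  intro htop
  have h := hTprox x z₀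
  rw [htop] at h
  have hlt : g z₀ + (((β / 2) * ‖z₀ - (x - (1 / β) • f' x)‖ ^ 2 : ℝ) : EReal) < ⊤ :=
    EReal.add_lt_top hz₀ (EReal.coe_ne_top _)
  have : (⊤ : EReal) + (((β / 2) * ‖T x - (x - (1 / β) • f' x)‖ ^ 2 : ℝ) : EReal) = ⊤ :=
    EReal.top_add_of_ne_bot (EReal.coe_ne_bot _)
  rw [this] at h
  exact absurd (lt_of_le_of_lt h hlt) (lt_irrefl _)

omit [CompleteSpace X] in
private lemma fista_gsub (hβ : 0 < β) (hg_nebot : ∀ x, g x ≠ ⊥) (hg_proper : ∃ x, g x ≠ ⊤)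
    (hg_conv : ∀ x y : X, ∀ a b : ℝ, 0 ≤ a → 0 ≤ b → a + b = 1 →
      g (a • x + b • y) ≤ (a : EReal) * g x + (b : EReal) * g y)
    (hTprox : ∀ x z : X,
      g (T x) + (((β / 2) * ‖T x - (x - (1 / β) • f' x)‖ ^ 2 : ℝ) : EReal)
        ≤ g z + (((β / 2) * ‖z - (x - (1 / β) • f' x)‖ ^ 2 : ℝ) : EReal))
    (x w : X) (hw : g w ≠ ⊤) :
    (g (T x)).toReal + β * ⟪(x - (1 / β) • f' x) - T x, w - T x⟫ ≤ (g w).toReal := by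
  set u := T x with hu
  set A := x - (1 / β) • f' x with hA
  set r := (g u).toReal with hr
  set sR := (g w).toReal with hsR
  have hgu : g u = (r : EReal) :=
    (EReal.coe_toReal (fista_gfin hg_proper hTprox x) (hg_nebot _)).symm
  have hgw : g w = (sR : EReal) := (EReal.coe_toReal hw (hg_nebot _)).symm
  have key : ∀ lam : ℝ, 0 < lam → lam ≤ 1 →
      r - sR - β * ⟪u - A, w - u⟫ ≤ lam * (β / 2 * ‖w - u‖ ^ 2) := by
    intro lam hl0 hl1
    have hz := hTprox x ((1 - lam) • u + lam • w)
    have hconv := hg_conv u w (1 - lam) lam (by linarith) hl0.le (by ring)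
    rw [hgu, hgw] at hconv
    rw [hgu] at hz
    set z := (1 - lam) • u + lam • w with hzdef
    have hcoe : ((1 - lam : ℝ) : EReal) * ((r : ℝ) : EReal) + ((lam : ℝ) : EReal) * ((sR : ℝ) : EReal)
        = (((1 - lam) * r + lam * sR : ℝ) : EReal) := by
      rw [← EReal.coe_mul, ← EReal.coe_mul, ← EReal.coe_add]
    rw [hcoe] at hconv
    have hchain : ((r : ℝ) : EReal) + (((β / 2) * ‖u - A‖ ^ 2 : ℝ) : EReal)
        ≤ (((1 - lam) * r + lam * sR + (β / 2) * ‖z - A‖ ^ 2 : ℝ) : EReal) := by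
      refine le_trans hz ?_
      calc g z + (((β / 2) * ‖z - A‖ ^ 2 : ℝ) : EReal)
          ≤ (((1 - lam) * r + lam * sR : ℝ) : EReal) + (((β / 2) * ‖z - A‖ ^ 2 : ℝ) : EReal) :=
            add_le_add_left hconv _
        _ = (((1 - lam) * r + lam * sR + (β / 2) * ‖z - A‖ ^ 2 : ℝ) : EReal) := by
            rw [← EReal.coe_add]
    rw [← EReal.coe_add, EReal.coe_le_coe_iff] at hchain
    have hznorm : ‖z - A‖ ^ 2 = ‖u - A‖ ^ 2 + 2 * (lam * ⟪u - A, w - u⟫) + lam ^ 2 * ‖w - u‖ ^ 2 := by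
      have hz2 : z - A = (u - A) + lam • (w - u) := by
        rw [hzdef]; module
      rw [hz2, @norm_add_sq_real, real_inner_smul_right, norm_smul, Real.norm_eq_abs,
        abs_of_pos hl0, mul_pow]
    rw [hznorm] at hchain
    have h2 : lam * (r - sR - β * ⟪u - A, w - u⟫ - lam * (β / 2 * ‖w - u‖ ^ 2)) ≤ 0 := by
      nlinarith [hchain]
    nlinarith [h2, hl0]
  have hK : 0 ≤ β / 2 * ‖w - u‖ ^ 2 := by positivity
  have hfinal : r - sR - β * ⟪u - A, w - u⟫ ≤ 0 := by
    by_contra hcon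
    push_neg at hcon
    set L := r - sR - β * ⟪u - A, w - u⟫ with hL
    set K := β / 2 * ‖w - u‖ ^ 2 with hK2
    have hlam0 : 0 < L / (K + 1) := by positivity
    have h := key (min 1 (L / (K + 1))) (lt_min one_pos hlam0) (min_le_left _ _)
    have hle : min 1 (L / (K + 1)) ≤ L / (K + 1) := min_le_right _ _
    have : min 1 (L / (K + 1)) * K ≤ L / (K + 1) * K :=
      mul_le_mul_of_nonneg_right hle hK
    have hKK : L / (K + 1) * K < L := by
      rw [div_mul_eq_mul_div, div_lt_iff₀ (by linarith)]
      nlinarith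
    linarith
  have : ⟪A - u, w - u⟫ = -⟪u - A, w - u⟫ := by
    rw [← inner_neg_left]; rw [neg_sub]
  rw [this]
  linarith

/-- The fundamental prox-gradient inequality. -/
private lemma fista_fund (hβ : 0 < β) (hfconv : ConvexOn ℝ Set.univ f)
    (hfgrad : ∀ x, HasGradientAt f (f' x) x) (hflip : LipschitzWith β.toNNReal f')
    (hg_nebot : ∀ x, g x ≠ ⊥) (hg_proper : ∃ x, g x ≠ ⊤)
    (hg_conv : ∀ x y : X, ∀ a b : ℝ, 0 ≤ a → 0 ≤ b → a + b = 1 →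
      g (a • x + b • y) ≤ (a : EReal) * g x + (b : EReal) * g y)
    (hTprox : ∀ x z : X,
      g (T x) + (((β / 2) * ‖T x - (x - (1 / β) • f' x)‖ ^ 2 : ℝ) : EReal)
        ≤ g z + (((β / 2) * ‖z - (x - (1 / β) • f' x)‖ ^ 2 : ℝ) : EReal))
    (x w : X) (hw : g w ≠ ⊤) :
    (f (T x) + (g (T x)).toReal) + β / 2 * ‖T x - x‖ ^ 2 + β * ⟪x - T x, w - x⟫
      ≤ f w + (g w).toReal := by
  have hcvx := fista_cvx_grad hfconv hfgrad x w
  have hdesc := fista_descent hβ hfgrad hflip x (T x)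
  have hgs := fista_gsub hβ hg_nebot hg_proper hg_conv hTprox x w hw
  set u := T x with hu
  have e1 : (x - (1 / β) • f' x) - u = (x - u) - (1 / β) • f' x := by module
  have e2 : ⟪(x - (1 / β) • f' x) - u, w - u⟫
      = ⟪x - u, w - u⟫ - (1 / β) * ⟪f' x, w - u⟫ := by
    rw [e1, inner_sub_left, real_inner_smul_left]
  have e3 : ⟪x - u, w - u⟫ = ⟪x - u, w - x⟫ + ‖x - u‖ ^ 2 := by
    have : w - u = (w - x) + (x - u) := by module
    rw [this, inner_add_right, real_inner_self_eq_norm_sq]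
  have e4 : ⟪f' x, w - u⟫ = ⟪f' x, w - x⟫ + ⟪f' x, x - u⟫ := by
    have : w - u = (w - x) + (x - u) := by module
    rw [this, inner_add_right]
  have e5 : ⟪f' x, u - x⟫ = -⟪f' x, x - u⟫ := by
    rw [← inner_neg_right, neg_sub]
  have e6 : ‖u - x‖ ^ 2 = ‖x - u‖ ^ 2 := by rw [norm_sub_rev]
  rw [e2, e3, e4] at hgs
  rw [e5, e6] at hdesc
  have hgs' : (g u).toReal + β * ⟪x - u, w - x⟫ + β * ‖x - u‖ ^ 2
      - ⟪f' x, w - x⟫ - ⟪f' x, x - u⟫ ≤ (g w).toReal := by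
    have expand : β * (⟪x - u, w - x⟫ + ‖x - u‖ ^ 2
        - 1 / β * (⟪f' x, w - x⟫ + ⟪f' x, x - u⟫))
        = β * ⟪x - u, w - x⟫ + β * ‖x - u‖ ^ 2 - ⟪f' x, w - x⟫ - ⟪f' x, x - u⟫ := by
      field_simp; ring
    nlinarith [hgs, expand]
  rw [show ‖u - x‖ ^ 2 = ‖x - u‖ ^ 2 from e6]
  linarith [hcvx, hdesc, hgs']

/-- Fixed points of `T` minimize `f + g`. -/
private lemma fista_fixmin (hβ : 0 < β) (hfconv : ConvexOn ℝ Set.univ f)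
    (hfgrad : ∀ x, HasGradientAt f (f' x) x) (hflip : LipschitzWith β.toNNReal f')
    (hg_nebot : ∀ x, g x ≠ ⊥) (hg_proper : ∃ x, g x ≠ ⊤)
    (hg_conv : ∀ x y : X, ∀ a b : ℝ, 0 ≤ a → 0 ≤ b → a + b = 1 →
      g (a • x + b • y) ≤ (a : EReal) * g x + (b : EReal) * g y)
    (hTprox : ∀ x z : X,
      g (T x) + (((β / 2) * ‖T x - (x - (1 / β) • f' x)‖ ^ 2 : ℝ) : EReal)
        ≤ g z + (((β / 2) * ‖z - (x - (1 / β) • f' x)‖ ^ 2 : ℝ) : EReal))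
    {m : X} (hm : T m = m) (w : X) (hw : g w ≠ ⊤) :
    f m + (g m).toReal ≤ f w + (g w).toReal := by
  have h := fista_fund hβ hfconv hfgrad hflip hg_nebot hg_proper hg_conv hTprox m w hw
  rw [hm] at h
  simp only [sub_self, norm_zero, inner_zero_left] at h
  linarith

end FistaAux

/-- The FISTA trajectory map, as a function of the starting point. -/
noncomputable def Straj {X : Type*} [NormedAddCommGroup X] [InnerProductSpace ℝ X]
    (T : X →L[ℝ] X) (t : ℕ → ℝ) (a : X) : ℕ → X × X
  | 0 => (a, a)
  | (n+1) =>
    let q := Straj T t a n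
    (T q.2, T q.2 + ((t n - 1) / t (n+1)) • (T q.2 - q.1))

section FistaTraj

variable {X : Type*} [NormedAddCommGroup X] [InnerProductSpace ℝ X]
variable (T : X →L[ℝ] X) (t : ℕ → ℝ)

lemma Straj_fst (a : X) (n : ℕ) :
    (Straj T t a (n+1)).1 = T (Straj T t a n).2 := rfl

lemma Straj_snd (a : X) (n : ℕ) :
    (Straj T t a (n+1)).2 = (Straj T t a (n+1)).1
      + ((t n - 1) / t (n+1)) • ((Straj T t a (n+1)).1 - (Straj T t a n).1) := rfl

lemma Straj_spec (x y : ℕ → X) (hy0 : y 0 = x 0)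
    (hx : ∀ n : ℕ, x (n + 1) = T (y n))
    (hy : ∀ n : ℕ, y (n + 1) = x (n + 1) + ((t n - 1) / t (n + 1)) • (x (n + 1) - x n)) :
    ∀ n, x n = (Straj T t (x 0) n).1 ∧ y n = (Straj T t (x 0) n).2 := by
  intro n
  induction n with
  | zero => exact ⟨rfl, by rw [hy0]; rfl⟩
  | succ k ih =>
    have h1 : x (k+1) = (Straj T t (x 0) (k+1)).1 := by
      rw [hx k, ih.2, Straj_fst]
    refine ⟨h1, ?_⟩
    rw [hy k, Straj_snd, ← h1, ih.1]

lemma Straj_addition (a b : X) (n : ℕ) :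
    (Straj T t (a + b) n).1 = (Straj T t a n).1 + (Straj T t b n).1 ∧
      (Straj T t (a + b) n).2 = (Straj T t a n).2 + (Straj T t b n).2 := by
  induction n with
  | zero => exact ⟨rfl, rfl⟩
  | succ k ih =>
    constructor
    · rw [Straj_fst, Straj_fst, Straj_fst, ih.2, map_add]
    · rw [Straj_snd, Straj_snd, Straj_snd, Straj_fst, Straj_fst, Straj_fst, ih.1, ih.2, map_add]
      module

lemma Straj_fixed {m : X} (hm : T m = m) (n : ℕ) : Straj T t m n = (m, m) := by
  induction n with
  | zero => rfl
  | succ k ih =>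
    have h1 : (Straj T t m (k+1)).1 = m := by rw [Straj_fst, ih]; exact hm
    have h2 := Straj_snd T t m k
    rw [h1] at h2
    have : (Straj T t m k).1 = m := by rw [ih]
    rw [this, sub_self, smul_zero, add_zero] at h2
    exact Prod.ext h1 h2

lemma Straj_comm (a : X) (n : ℕ) :
    (Straj T t (T a) n).1 = T (Straj T t a n).1 ∧
      (Straj T t (T a) n).2 = T (Straj T t a n).2 := by
  induction n with
  | zero => exact ⟨rfl, rfl⟩
  | succ k ih =>
    constructor
    · rw [Straj_fst, Straj_fst, ih.2]
    · rw [Straj_snd, Straj_snd, Straj_fst, Straj_fst, ih.1, ih.2, map_add, map_smul, map_sub]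

lemma Straj_neg (a : X) (n : ℕ) :
    (Straj T t (-a) n).1 = -(Straj T t a n).1 ∧
      (Straj T t (-a) n).2 = -(Straj T t a n).2 := by
  induction n with
  | zero => exact ⟨rfl, rfl⟩
  | succ k ih =>
    constructor
    · rw [Straj_fst, Straj_fst, ih.2, map_neg]
    · rw [Straj_snd, Straj_snd, Straj_fst, Straj_fst, ih.1, ih.2, map_neg]
      module

lemma Straj_vsub (v : X) (n : ℕ) :
    (Straj T t (v - T v) n).1 = (Straj T t v n).1 - T ((Straj T t v n).1) := by
  have h1 := (Straj_addition T t v (-(T v)) n).1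
  have h2 := (Straj_neg T t (T v) n).1
  have h3 := (Straj_comm T t v n).1
  rw [sub_eq_add_neg, h1, h2, h3, ← sub_eq_add_neg]

lemma fista_sq_le_imp {x y : ℝ} (hx : 0 ≤ x) (hy : 0 ≤ y) (h : x^2 ≤ y^2) : x ≤ y := by
  have := Real.sqrt_le_sqrt h
  rwa [Real.sqrt_sq hx, Real.sqrt_sq hy] at this

end FistaTraj

section FistaMain

variable {X : Type*} [NormedAddCommGroup X] [InnerProductSpace ℝ X] [CompleteSpace X]
variable (T : X →L[ℝ] X) (t : ℕ → ℝ)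
variable {β : ℝ} {f : X → ℝ} {f' : X → X} {g : X → EReal}

set_option maxHeartbeats 2000000 in
/-- Uniform bounds along FISTA trajectories, relative to a fixed point `p` of `T`. -/
lemma fista_traj_bounds
    (hβ : 0 < β) (hTne : ‖T‖ ≤ 1)
    (ht0 : t 0 = 1)
    (ht1 : ∀ n : ℕ, t n ≥ ((n : ℝ) + 2) / 2)
    (ht2 : ∀ n : ℕ, (t n) ^ 2 ≥ (t (n + 1)) ^ 2 - t (n + 1))
    (hfund : ∀ x w : X, g w ≠ ⊤ →
      (f (T x) + (g (T x)).toReal) + β / 2 * ‖T x - x‖ ^ 2 + β * ⟪x - T x, w - x⟫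
        ≤ f w + (g w).toReal)
    (hfix : ∀ {m : X}, T m = m → ∀ w : X, g w ≠ ⊤ →
      f m + (g m).toReal ≤ f w + (g w).toReal)
    (hgT : ∀ z : X, g (T z) ≠ ⊤)
    (p : X) (hp : T p = p) (a : X) :
    (∀ n, ‖(Straj T t a n).1 - p‖ ≤ Real.sqrt 2 * ‖a - p‖) ∧
    (∀ n : ℕ, ‖(Straj T t a (n+1)).1 - T ((Straj T t a (n+1)).1)‖ ≤ 3 * ‖a - p‖ / ((n:ℝ) + 2)) ∧
    (∀ n : ℕ, ‖(Straj T t a (n+1)).1 - (Straj T t a n).1‖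
        ≤ 2 * (Real.sqrt 2 * ‖a - p‖) / t n) := by
  have htp : ∀ n, 0 < t n := fun n => lt_of_lt_of_le (by positivity) (ht1 n)
  have ht1' : ∀ n, 1 ≤ t n := fun n => le_trans (by
    have : (0:ℝ) ≤ (n:ℝ) := Nat.cast_nonneg n
    linarith) (ht1 n)
  set R := ‖a - p‖ with hR
  have hR0 : 0 ≤ R := norm_nonneg _
  set ξ : ℕ → X := fun n => (Straj T t a n).1 with hξdef
  set υ : ℕ → X := fun n => (Straj T t a n).2 with hυdef
  have hξ0 : ξ 0 = a := rfl
  have hυ0 : υ 0 = a := rfl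
  have hξs : ∀ n, ξ (n+1) = T (υ n) := fun n => Straj_fst T t a n
  have hυs : ∀ n, υ (n+1) = ξ (n+1) + ((t n - 1) / t (n+1)) • (ξ (n+1) - ξ n) :=
    fun n => Straj_snd T t a n
  set δ : ℕ → ℝ := fun m => (f (ξ m) + (g (ξ m)).toReal) - (f p + (g p).toReal) with hδdef
  set w : ℕ → X := fun n => t n • (ξ (n+1) - ξ n) + (ξ n - p) with hwdef
  set Φ : ℕ → ℝ := fun n => 2 * (t n)^2 * δ (n+1) + β * ‖w n‖^2 with hΦdef
  clear_value R δ w Φ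
  have hgp : g p ≠ ⊤ := by rw [← hp]; exact hgT p
  have hgξ : ∀ n, g (ξ (n+1)) ≠ ⊤ := fun n => by rw [hξs n]; exact hgT _
  have hδnn : ∀ n, 0 ≤ δ (n+1) := by
    intro n
    have := hfix hp (ξ (n+1)) (hgξ n)
    simp only [hδdef]
    linarith
  have hstep : ∀ n, Φ (n+1) ≤ Φ n := by
    intro n
    have hA0 := hfund (υ (n+1)) (ξ (n+1)) (hgξ n)
    have hB0 := hfund (υ (n+1)) p hgp
    rw [← hξs (n+1)] at hA0 hB0
    simp only [show n+1+1 = n+2 from rfl] at hA0 hB0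
    have hτ1 : 1 ≤ t (n+1) := ht1' (n+1)
    have hτ0 : 0 < t (n+1) := htp (n+1)
    set d : X := υ (n+1) - ξ (n+2) with hddef
    have hnrm : ‖ξ (n+2) - υ (n+1)‖ = ‖d‖ := by rw [hddef, norm_sub_rev]
    rw [hnrm] at hA0 hB0
    have eA : ⟪υ (n+1) - ξ (n+2), ξ (n+1) - υ (n+1)⟫
        = ⟪d, ξ (n+1)⟫ - ⟪d, υ (n+1)⟫ := by
      rw [← hddef, inner_sub_right]
    have eB : ⟪υ (n+1) - ξ (n+2), p - υ (n+1)⟫ = ⟪d, p⟫ - ⟪d, υ (n+1)⟫ := by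
      rw [← hddef, inner_sub_right]
    rw [eA] at hA0
    rw [eB] at hB0
    have claim1 : t (n+1) • (υ (n+1) - ξ (n+1)) = (t n - 1) • (ξ (n+1) - ξ n) := by
      rw [hυs n, add_sub_cancel_left, smul_smul]
      congr 1
      field_simp
    have claim2 : w n = t (n+1) • υ (n+1) - (t (n+1) - 1) • ξ (n+1) - p := by
      have e : t (n+1) • υ (n+1) - (t (n+1) - 1) • ξ (n+1) - p
          = t (n+1) • (υ (n+1) - ξ (n+1)) + (ξ (n+1) - p) := by module
      rw [e, claim1]
      simp only [hwdef]
      module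
    have claim3 : w (n+1) = w n - t (n+1) • d := by
      rw [claim2, hddef]
      simp only [hwdef]
      module
    have hexp : ‖w (n+1)‖^2 = ‖w n‖^2 - 2 * (t (n+1) * ⟪d, w n⟫) + (t (n+1))^2 * ‖d‖^2 := by
      rw [claim3, @norm_sub_sq_real, real_inner_smul_right, norm_smul, Real.norm_eq_abs,
        abs_of_pos hτ0, mul_pow, real_inner_comm]
    have hWrel : ⟪d, w n⟫ = t (n+1) * ⟪d, υ (n+1)⟫ - (t (n+1) - 1) * ⟪d, ξ (n+1)⟫ - ⟪d, p⟫ := by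
      rw [claim2, inner_sub_right, inner_sub_right, real_inner_smul_right, real_inner_smul_right]
    rw [hWrel] at hexp
    have hA' : δ (n+2) + β/2 * ‖d‖^2 + β * (⟪d, ξ (n+1)⟫ - ⟪d, υ (n+1)⟫) ≤ δ (n+1) := by
      simp only [hδdef]; linarith [hA0]
    have hB' : δ (n+2) + β/2 * ‖d‖^2 + β * (⟪d, p⟫ - ⟪d, υ (n+1)⟫) ≤ 0 := by
      simp only [hδdef]; linarith [hB0]
    have c1 : (0:ℝ) ≤ 2 * t (n+1) * (t (n+1) - 1) :=
      mul_nonneg (by linarith) (by linarith)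
    have c2 : (0:ℝ) ≤ 2 * t (n+1) := by linarith
    have hA2 := mul_le_mul_of_nonneg_left hA' c1
    have hB2 := mul_le_mul_of_nonneg_left hB' c2
    rw [mul_zero] at hB2
    have hD1 : 2 * t (n+1) * (t (n+1) - 1) * δ (n+1) ≤ 2 * (t n)^2 * δ (n+1) := by
      have h1 : t (n+1) * (t (n+1) - 1) ≤ (t n)^2 := by nlinarith [ht2 n]
      have h2 := hδnn n
      nlinarith
    simp only [hΦdef, show n+1+1 = n+2 from rfl]
    rw [hexp]
    have final : ∀ A B D1v D2v Nv Pv Qv Rv Wv : ℝ,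
        2*A*(A-1)*(D2v + β/2*Nv + β*(Pv-Qv)) ≤ 2*A*(A-1)*D1v →
        2*A*(D2v + β/2*Nv + β*(Rv-Qv)) ≤ 0 →
        2*A*(A-1)*D1v ≤ 2*B^2*D1v →
        2*A^2*D2v + β*(Wv - 2*(A*(A*Qv - (A-1)*Pv - Rv)) + A^2*Nv) ≤ 2*B^2*D1v + β*Wv := by
      intro A B D1v D2v Nv Pv Qv Rv Wv h1 h2 h3
      linarith
    have hfin := final (t (n+1)) (t n) (δ (n+1)) (δ (n+2)) (‖d‖^2) (⟪d, ξ (n+1)⟫)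
      (⟪d, υ (n+1)⟫) (⟪d, p⟫) (‖w n‖^2) hA2 hB2 hD1
    linarith [hfin]
  have hδ1 : δ 1 ≤ β/2 * R^2 := by
    have h := hfund a p hgp
    have hξ1 : ξ 1 = T a := by rw [hξs 0, hυ0]
    have h1 : |⟪a - T a, p - a⟫| ≤ ‖a - T a‖ * ‖p - a‖ := abs_real_inner_le_norm _ _
    have h2 : ‖p - a‖ = R := by rw [hR, norm_sub_rev]
    rw [h2] at h1
    have h3 := abs_le.1 h1
    rw [norm_sub_rev] at h
    have h4 : β * (-(‖a - T a‖ * R)) ≤ β * ⟪a - T a, p - a⟫ :=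
      mul_le_mul_of_nonneg_left h3.1 hβ.le
    have h5 : 0 ≤ β * (‖a - T a‖ - R)^2 := mul_nonneg hβ.le (sq_nonneg _)
    simp only [hδdef, hξ1]
    nlinarith [h, h4, h5]
  have hw0 : ‖w 0‖ ≤ R := by
    have hξ1 : ξ 1 = T a := by rw [hξs 0, hυ0]
    have e : w 0 = ξ 1 - p := by
      simp only [hwdef, ht0, one_smul, hξ0]
      module
    have e2 : ξ 1 - p = T (a - p) := by rw [hξ1, map_sub, hp]
    rw [e, e2]
    calc ‖T (a - p)‖ ≤ ‖T‖ * ‖a - p‖ := T.le_opNorm _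
      _ ≤ 1 * ‖a - p‖ := mul_le_mul_of_nonneg_right hTne (norm_nonneg _)
      _ = R := by rw [one_mul]; exact hR.symm
  have hΦ0 : Φ 0 ≤ 2 * β * R^2 := by
    simp only [hΦdef, ht0, show (0:ℕ)+1 = 1 from rfl]
    have h6 : ‖w 0‖^2 ≤ R^2 := by nlinarith [hw0, norm_nonneg (w 0)]
    have h7 : β * ‖w 0‖^2 ≤ β * R^2 := mul_le_mul_of_nonneg_left h6 hβ.le
    nlinarith [hδ1, h7]
  have hΦb : ∀ n, Φ n ≤ 2 * β * R^2 := by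
    intro n
    induction n with
    | zero => exact hΦ0
    | succ k ih => exact le_trans (hstep k) ih
  have hδb : ∀ n, δ (n+1) ≤ β * R^2 / (t n)^2 := by
    intro n
    have h1 : 2 * (t n)^2 * δ (n+1) ≤ 2 * β * R^2 := by
      have := hΦb n
      simp only [hΦdef] at this
      nlinarith [norm_nonneg (w n), hβ, sq_nonneg (‖w n‖)]
    rw [le_div_iff₀ (pow_pos (htp n) 2)]
    nlinarith [h1]
  have hwb : ∀ n, ‖w n‖ ≤ Real.sqrt 2 * R := by
    intro n
    have h1 : β * ‖w n‖^2 ≤ 2 * β * R^2 := by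
      have := hΦb n
      simp only [hΦdef] at this
      nlinarith [hδnn n, sq_nonneg (t n)]
    have h2 : ‖w n‖^2 ≤ 2 * R^2 := by nlinarith [hβ]
    refine fista_sq_le_imp (norm_nonneg _) (by positivity) ?_
    rw [mul_pow, Real.sq_sqrt (by norm_num : (0:ℝ) ≤ 2)]
    exact h2
  have hC1 : ∀ n, ‖ξ n - p‖ ≤ Real.sqrt 2 * R := by
    intro n
    induction n with
    | zero =>
      rw [hξ0, ← hR]
      have h1 : (1:ℝ) ≤ Real.sqrt 2 := by
        have h2 := Real.sqrt_le_sqrt (show (1:ℝ) ≤ 2 by norm_num)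
        rwa [Real.sqrt_one] at h2
      nlinarith [hR0, h1]
    | succ k ih =>
      have h1 : (1 / t k) * t k = 1 := one_div_mul_cancel (ne_of_gt (htp k))
      have key : ξ (k+1) - p = (1 / t k) • w k + (1 - 1 / t k) • (ξ k - p) := by
        simp only [hwdef]
        rw [smul_add, smul_smul, h1, one_smul]
        module
      have h1t : 0 < 1 / t k := one_div_pos.2 (htp k)
      have h2t : 0 ≤ 1 - 1 / t k := by
        have := ht1' k
        have h3 : 1 / t k ≤ 1 := by
          rw [div_le_one (htp k)]; exact this
        linarith
      calc ‖ξ (k+1) - p‖ ≤ ‖(1 / t k) • w k‖ + ‖(1 - 1 / t k) • (ξ k - p)‖ := by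
            rw [key]; exact norm_add_le _ _
        _ = (1 / t k) * ‖w k‖ + (1 - 1 / t k) * ‖ξ k - p‖ := by
            rw [norm_smul, norm_smul, Real.norm_eq_abs, Real.norm_eq_abs,
              abs_of_pos h1t, abs_of_nonneg h2t]
        _ ≤ (1 / t k) * (Real.sqrt 2 * R) + (1 - 1 / t k) * (Real.sqrt 2 * R) := by
            gcongr
            exact hwb k
        _ = Real.sqrt 2 * R := by ring
  have hC3 : ∀ n : ℕ, ‖ξ (n+1) - ξ n‖ ≤ 2 * (Real.sqrt 2 * R) / t n := by
    intro n
    have e : t n • (ξ (n+1) - ξ n) = w n - (ξ n - p) := by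
      simp only [hwdef]; module
    have h1 : t n * ‖ξ (n+1) - ξ n‖ = ‖t n • (ξ (n+1) - ξ n)‖ := by
      rw [norm_smul, Real.norm_eq_abs, abs_of_pos (htp n)]
    have h2 : ‖t n • (ξ (n+1) - ξ n)‖ ≤ 2 * (Real.sqrt 2 * R) := by
      rw [e]
      calc ‖w n - (ξ n - p)‖ ≤ ‖w n‖ + ‖ξ n - p‖ := norm_sub_le _ _
        _ ≤ Real.sqrt 2 * R + Real.sqrt 2 * R := add_le_add (hwb n) (hC1 n)
        _ = 2 * (Real.sqrt 2 * R) := by ring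
    rw [le_div_iff₀ (htp n)]
    nlinarith [h1, h2]
  have hC2 : ∀ n : ℕ, ‖ξ (n+1) - T (ξ (n+1))‖ ≤ 3 * R / ((n:ℝ) + 2) := by
    intro n
    have hres : β/2 * ‖T (ξ (n+1)) - ξ (n+1)‖^2 ≤ δ (n+1) := by
      have h := hfund (ξ (n+1)) (ξ (n+1)) (hgξ n)
      have h2 : f p + (g p).toReal ≤ f (T (ξ (n+1))) + (g (T (ξ (n+1)))).toReal :=
        hfix hp (T (ξ (n+1))) (hgT _)
      simp only [sub_self, inner_zero_right, mul_zero, add_zero] at h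
      simp only [hδdef]
      linarith
    have hδn := hδb n
    have htn := ht1 n
    have hn2 : (0:ℝ) < (n:ℝ) + 2 := by positivity
    have h4 : (0:ℝ) < (t n)^2 := pow_pos (htp n) 2
    set q := ‖T (ξ (n+1)) - ξ (n+1)‖ with hqdef
    have qnn : 0 ≤ q := norm_nonneg _
    clear_value q
    have e1 : δ (n+1) * (t n)^2 ≤ β * R^2 := (le_div_iff₀ h4).1 hδn
    have e2 : β/2 * q^2 * (t n)^2 ≤ β * R^2 := by
      have := mul_le_mul_of_nonneg_right hres (sq_nonneg (t n))
      linarith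
    have e3 : q^2 * (t n)^2 ≤ 2 * R^2 := by nlinarith [e2, hβ]
    have e4 : q * t n ≤ Real.sqrt 2 * R := by
      refine fista_sq_le_imp (mul_nonneg qnn (htp n).le) (by positivity) ?_
      rw [mul_pow, mul_pow, Real.sq_sqrt (by norm_num : (0:ℝ) ≤ 2)]
      linarith [e3]
    have hs2 : Real.sqrt 2 ≤ 3/2 := by
      nlinarith [Real.sq_sqrt (show (0:ℝ) ≤ 2 by norm_num), Real.sqrt_nonneg 2,
        sq_nonneg (Real.sqrt 2 - 3/2)]
    have hsnn : (0:ℝ) ≤ Real.sqrt 2 := Real.sqrt_nonneg 2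
    have m1 : q * ((n:ℝ)+2) ≤ q * (2 * t n) :=
      mul_le_mul_of_nonneg_left (by linarith [ht1 n]) qnn
    have m2 : Real.sqrt 2 * R ≤ (3/2) * R := mul_le_mul_of_nonneg_right hs2 hR0
    rw [norm_sub_rev (ξ (n+1)), ← hqdef, le_div_iff₀ hn2]
    linarith [m1, e4, m2]
  refine ⟨fun n => ?_, fun n => ?_, fun n => ?_⟩
  · exact hC1 n
  · exact hC2 n
  · exact hC3 n

/-- Mᗮ is contained in the closure of the range of `I - T`. -/
lemma fista_closure_range (hTz : ∀ z : X, ‖T z‖ ≤ ‖z‖) (u : X)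
    (hperp : u ∈ (LinearMap.ker (((1 : X →L[ℝ] X) - T) : X →ₗ[ℝ] X))ᗮ) :
    u ∈ closure (Set.range (fun v : X => v - T v)) := by
  set A : X →L[ℝ] X := (1 : X →L[ℝ] X) - T with hA
  have hAv : ∀ v : X, A v = v - T v := by
    intro v; simp [hA, ContinuousLinearMap.sub_apply]
  have h1 : u ∈ (LinearMap.range (A : X →ₗ[ℝ] X))ᗮᗮ := by
    rw [Submodule.mem_orthogonal]
    intro r hr
    rw [Submodule.mem_orthogonal] at hr
    have hr0 : ⟪r - T r, r⟫ = 0 := by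
      have := hr (A r) (LinearMap.mem_range.2 ⟨r, rfl⟩)
      rwa [hAv] at this
    have hTr : T r = r := by
      have h2 : ⟪T r, r⟫ = ‖r‖^2 := by
        have h3 : ⟪r, r⟫ - ⟪T r, r⟫ = 0 := by
          rw [← inner_sub_left]; exact hr0
        rw [real_inner_self_eq_norm_sq] at h3
        linarith
      have h4 : ‖T r - r‖^2 ≤ 0 := by
        rw [@norm_sub_sq_real, h2]
        nlinarith [hTz r, norm_nonneg r, norm_nonneg (T r), sq_nonneg (‖T r‖)]
      have h6 : ‖T r - r‖ = 0 := by nlinarith [norm_nonneg (T r - r)]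
      have h5 : T r - r = 0 := norm_eq_zero.1 h6
      rwa [sub_eq_zero] at h5
    have hrker : r ∈ LinearMap.ker (A : X →ₗ[ℝ] X) := by
      rw [LinearMap.mem_ker]
      have : (A : X →ₗ[ℝ] X) r = r - T r := hAv r
      rw [this, hTr, sub_self]
    exact hperp r hrker
  rw [Submodule.orthogonal_orthogonal_eq_closure] at h1
  have h2 : ((LinearMap.range (A : X →ₗ[ℝ] X)).topologicalClosure : Set X)
      = closure ((LinearMap.range (A : X →ₗ[ℝ] X) : Submodule ℝ X) : Set X) :=
    Submodule.topologicalClosure_coe _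
  have h3 : ((LinearMap.range (A : X →ₗ[ℝ] X) : Submodule ℝ X) : Set X)
      = Set.range (fun v : X => v - T v) := by
    ext z
    simp only [SetLike.mem_coe, LinearMap.mem_range, Set.mem_range]
    constructor
    · rintro ⟨v, rfl⟩; exact ⟨v, (hAv v).symm⟩
    · rintro ⟨v, rfl⟩; exact ⟨v, hAv v⟩
  have h4 : u ∈ ((LinearMap.range (A : X →ₗ[ℝ] X)).topologicalClosure : Set X) := h1
  rw [h2, h3] at h4
  exact h4

end FistaMain

set_option maxHeartbeats 2000000 in
theorem fista_strong_convergence_linear {X : Type*} [NormedAddCommGroup X]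
    [InnerProductSpace ℝ X] [CompleteSpace X]
    (β : ℝ) (hβ : 0 < β)
    (f : X → ℝ) (f' : X → X)
    (hfconv : ConvexOn ℝ Set.univ f)
    (hfgrad : ∀ x, HasGradientAt f (f' x) x)
    (hflip : LipschitzWith β.toNNReal f')
    (g : X → EReal)
    (hg_nebot : ∀ x, g x ≠ ⊥) (hg_proper : ∃ x, g x ≠ ⊤)
    (hg_lsc : LowerSemicontinuous g)
    (hg_conv : ∀ x y : X, ∀ a b : ℝ, 0 ≤ a → 0 ≤ b → a + b = 1 →
      g (a • x + b • y) ≤ (a : EReal) * g x + (b : EReal) * g y)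
    (T : X →L[ℝ] X) (hTne : ‖T‖ ≤ 1)
    -- T is the proximal gradient operator: T x = prox_{g/β}(x - (1/β)∇f(x))
    (hTprox : ∀ x z : X,
      g (T x) + (((β / 2) * ‖T x - (x - (1 / β) • f' x)‖ ^ 2 : ℝ) : EReal)
        ≤ g z + (((β / 2) * ‖z - (x - (1 / β) • f' x)‖ ^ 2 : ℝ) : EReal))
    (hTprox_unique : ∀ x z : X,
      (∀ w : X, g z + (((β / 2) * ‖z - (x - (1 / β) • f' x)‖ ^ 2 : ℝ) : EReal)
          ≤ g w + (((β / 2) * ‖w - (x - (1 / β) • f' x)‖ ^ 2 : ℝ) : EReal)) → z = T x)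
    -- Argmin(f+g) is nonempty
    (hS : ∃ s : X, ∀ z : X, (f s : EReal) + g s ≤ (f z : EReal) + g z)
    (t : ℕ → ℝ) (ht0 : t 0 = 1)
    (ht1 : ∀ n : ℕ, t n ≥ ((n : ℝ) + 2) / 2)
    (ht2 : ∀ n : ℕ, (t n) ^ 2 ≥ (t (n + 1)) ^ 2 - t (n + 1))
    (x y : ℕ → X) (hy0 : y 0 = x 0)
    (hx : ∀ n : ℕ, x (n + 1) = T (y n))
    (hy : ∀ n : ℕ, y (n + 1) = x (n + 1) + ((t n - 1) / t (n + 1)) • (x (n + 1) - x n)) :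
    haveI : CompleteSpace (LinearMap.ker (((1 : X →L[ℝ] X) - T) : X →ₗ[ℝ] X)) :=
      (ContinuousLinearMap.isClosed_ker ((1 : X →L[ℝ] X) - T)).completeSpace_coe
    Filter.Tendsto x Filter.atTop
        (nhds (Submodule.orthogonalProjectionOnto (LinearMap.ker (((1 : X →L[ℝ] X) - T) : X →ₗ[ℝ] X)) (x 0) : X))
      ∧ Filter.Tendsto y Filter.atTop
        (nhds (Submodule.orthogonalProjectionOnto (LinearMap.ker (((1 : X →L[ℝ] X) - T) : X →ₗ[ℝ] X)) (x 0) : X)) := by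
  haveI : CompleteSpace (LinearMap.ker (((1 : X →L[ℝ] X) - T) : X →ₗ[ℝ] X)) :=
    (ContinuousLinearMap.isClosed_ker ((1 : X →L[ℝ] X) - T)).completeSpace_coe
  set p : X := (Submodule.orthogonalProjectionOnto (LinearMap.ker (((1 : X →L[ℝ] X) - T) : X →ₗ[ℝ] X)) (x 0) : X)
    with hpdef
  have hTz : ∀ z : X, ‖T z‖ ≤ ‖z‖ := by
    intro z
    calc ‖T z‖ ≤ ‖T‖ * ‖z‖ := T.le_opNorm z
      _ ≤ 1 * ‖z‖ := mul_le_mul_of_nonneg_right hTne (norm_nonneg z)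
      _ = ‖z‖ := one_mul _
  have hpM : p ∈ LinearMap.ker (((1 : X →L[ℝ] X) - T) : X →ₗ[ℝ] X) := by
    rw [hpdef]; exact SetLike.coe_mem _
  have hp : T p = p := by
    have h := LinearMap.mem_ker.1 hpM
    have h2 : p - T p = 0 := by
      have e : ((1 : X →L[ℝ] X) - T) p = p - T p := by
        simp [ContinuousLinearMap.sub_apply]
      rw [← e]; exact h
    rw [sub_eq_zero] at h2
    exact h2.symm
  have hgT : ∀ z : X, g (T z) ≠ ⊤ := fista_gfin hg_proper hTprox
  have hfund : ∀ x' w' : X, g w' ≠ ⊤ →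
      (f (T x') + (g (T x')).toReal) + β / 2 * ‖T x' - x'‖ ^ 2 + β * ⟪x' - T x', w' - x'⟫
        ≤ f w' + (g w').toReal :=
    fun x' w' hw' =>
      fista_fund hβ hfconv hfgrad hflip hg_nebot hg_proper hg_conv hTprox x' w' hw'
  have hfix : ∀ {m : X}, T m = m → ∀ w' : X, g w' ≠ ⊤ →
      f m + (g m).toReal ≤ f w' + (g w').toReal :=
    fun {m} hm w' hw' =>
      fista_fixmin hβ hfconv hfgrad hflip hg_nebot hg_proper hg_conv hTprox hm w' hw'
  have htb := fun a : X =>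
    fista_traj_bounds T t hβ hTne ht0 ht1 ht2 hfund hfix hgT p hp a
  have hspec : ∀ n, x n = (Straj T t (x 0) n).1 :=
    fun n => (Straj_spec T t x y hy0 hx hy n).1
  have hperp : x 0 - p ∈ (LinearMap.ker (((1 : X →L[ℝ] X) - T) : X →ₗ[ℝ] X))ᗮ := by
    rw [hpdef]; exact Submodule.sub_starProjection_mem_orthogonal _
  have hclos : x 0 - p ∈ closure (Set.range (fun v : X => v - T v)) :=
    fista_closure_range T hTz _ hperp
  have hs2 : Real.sqrt 2 ≤ 3/2 := by
    nlinarith [Real.sq_sqrt (show (0:ℝ) ≤ 2 by norm_num), Real.sqrt_nonneg 2,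
      sq_nonneg (Real.sqrt 2 - 3/2)]
  have hsnn : (0:ℝ) ≤ Real.sqrt 2 := Real.sqrt_nonneg 2
  have hxconv : Filter.Tendsto x Filter.atTop (nhds p) := by
    rw [Metric.tendsto_atTop]
    intro ε hε
    obtain ⟨b, hbmem, hbd⟩ := Metric.mem_closure_iff.1 hclos (ε/4) (by positivity)
    obtain ⟨v, hv⟩ := hbmem
    dsimp only at hv
    set e : X := (x 0 - p) - (v - T v) with hedef
    have he : ‖e‖ < ε/4 := by
      rw [hedef, hv, ← dist_eq_norm]
      exact hbd
    have hdecomp : ∀ n, x n - p = ((Straj T t (p + e) n).1 - p) + (Straj T t (v - T v) n).1 := by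
      intro n
      have h0 : x 0 = (p + e) + (v - T v) := by rw [hedef]; abel
      have h1 : (Straj T t (x 0) n).1
          = (Straj T t (p + e) n).1 + (Straj T t (v - T v) n).1 := by
        rw [h0]; exact (Straj_addition T t _ _ n).1
      rw [hspec n, h1]; abel
    have hb1 : ∀ n, ‖(Straj T t (p + e) n).1 - p‖ ≤ Real.sqrt 2 * ‖e‖ := by
      intro n
      have h := (htb (p + e)).1 n
      rwa [add_sub_cancel_left] at h
    have hb2 : ∀ m : ℕ, ‖(Straj T t (v - T v) (m+1)).1‖ ≤ 3 * ‖v - p‖ / ((m:ℝ) + 2) := by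
      intro m
      have h2 := (htb v).2.1 m
      rw [Straj_vsub]
      exact h2
    obtain ⟨N0, hN0⟩ := exists_nat_gt (6 * ‖v - p‖ / ε)
    refine ⟨N0 + 1, fun n hn => ?_⟩
    obtain ⟨m, rfl⟩ : ∃ m, n = m + 1 := ⟨n - 1, by omega⟩
    rw [dist_eq_norm]
    have hterm1 : ‖(Straj T t (p + e) (m+1)).1 - p‖ < ε/2 := by
      have h := hb1 (m+1)
      nlinarith [he, hε, hs2, hsnn, norm_nonneg e]
    have hterm2 : ‖(Straj T t (v - T v) (m+1)).1‖ ≤ ε/2 := by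
      have h6 := hb2 m
      have hm : (N0:ℝ) ≤ (m:ℝ) := by exact_mod_cast (by omega : N0 ≤ m)
      have hm2 : (0:ℝ) < (m:ℝ) + 2 := by positivity
      have h7 : 6 * ‖v - p‖ / ε < (m:ℝ) + 2 := lt_of_lt_of_le hN0 (by linarith)
      have h8 : 6 * ‖v - p‖ < ((m:ℝ) + 2) * ε := (div_lt_iff₀ hε).1 h7
      have h9 : 3 * ‖v - p‖ / ((m:ℝ) + 2) ≤ ε/2 := by
        rw [div_le_iff₀ hm2]
        linarith
      linarith
    calc ‖x (m+1) - p‖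
        = ‖((Straj T t (p + e) (m+1)).1 - p) + (Straj T t (v - T v) (m+1)).1‖ := by
          rw [hdecomp (m+1)]
      _ ≤ ‖(Straj T t (p + e) (m+1)).1 - p‖ + ‖(Straj T t (v - T v) (m+1)).1‖ :=
          norm_add_le _ _
      _ < ε/2 + ε/2 := add_lt_add_of_lt_of_le hterm1 hterm2
      _ = ε := by ring
  have htp : ∀ n, 0 < t n := fun n => lt_of_lt_of_le (by positivity) (ht1 n)
  have ht1' : ∀ n, 1 ≤ t n := fun n => le_trans (by
    have : (0:ℝ) ≤ (n:ℝ) := Nat.cast_nonneg n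
    linarith) (ht1 n)
  set S : ℝ := Real.sqrt 2 * ‖x 0 - p‖ with hSdef
  have hS0 : 0 ≤ S := mul_nonneg hsnn (norm_nonneg _)
  have hdiffb : ∀ m : ℕ, ‖y (m+1) - x (m+1)‖ ≤ 4 * S / ((m:ℝ) + 3) := by
    intro m
    have hd := (htb (x 0)).2.2 m
    rw [← hspec, ← hspec, ← hSdef] at hd
    have hcnn : 0 ≤ (t m - 1) / t (m+1) := div_nonneg (by linarith [ht1' m]) (htp (m+1)).le
    have h1 : ‖y (m+1) - x (m+1)‖ = (t m - 1) / t (m+1) * ‖x (m+1) - x m‖ := by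
      rw [hy m, add_sub_cancel_left, norm_smul, Real.norm_eq_abs, abs_of_nonneg hcnn]
    have h2 : (t m - 1) / t (m+1) * ‖x (m+1) - x m‖
        ≤ (t m - 1) / t (m+1) * (2 * S / t m) :=
      mul_le_mul_of_nonneg_left hd hcnn
    have h3 : (t m - 1) / t (m+1) * (2 * S / t m) ≤ 4 * S / ((m:ℝ) + 3) := by
      rw [div_mul_div_comm, div_le_div_iff₀ (mul_pos (htp (m+1)) (htp m)) (by positivity : (0:ℝ) < (m:ℝ) + 3)]
      have hτ : ((m:ℝ) + 3) / 2 ≤ t (m+1) := by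
        have := ht1 (m+1)
        push_cast at this ⊢
        linarith
      have hσ1 : 1 ≤ t m := ht1' m
      have k1 : 0 ≤ S * ((m:ℝ) + 3) := mul_nonneg hS0 (by positivity)
      have k2 : 0 ≤ S * t m := mul_nonneg hS0 (htp m).le
      nlinarith [k1, k2, hτ, hσ1, mul_le_mul_of_nonneg_left hτ k2]
    linarith [h1, h2, h3]
  have hyx : Filter.Tendsto (fun n => y n - x n) Filter.atTop (nhds 0) := by
    rw [tendsto_zero_iff_norm_tendsto_zero]
    have hglim : Filter.Tendsto (fun n : ℕ => 4 * S / ((n:ℝ) + 2)) Filter.atTop (nhds 0) := by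
      have hinfty : Filter.Tendsto (fun n : ℕ => (n:ℝ) + 2) Filter.atTop Filter.atTop :=
        Filter.tendsto_atTop_add_const_right _ 2 tendsto_natCast_atTop_atTop
      have hinv := hinfty.inv_tendsto_atTop
      have := hinv.const_mul (4 * S)
      simpa [div_eq_mul_inv] using this
    refine squeeze_zero (fun n => norm_nonneg _) (fun n => ?_) hglim
    cases n with
    | zero =>
      rw [hy0, sub_self, norm_zero]
      positivity
    | succ m =>
      have h := hdiffb m
      have : ((m:ℝ) + 1) + 2 = (m:ℝ) + 3 := by ring
      rw [show ((m+1:ℕ):ℝ) = (m:ℝ) + 1 by push_cast; ring, this]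
      exact h
  have hyconv : Filter.Tendsto y Filter.atTop (nhds p) := by
    have h := hxconv.add hyx
    have e : (fun n => x n + (y n - x n)) = y := by
      funext n; abel
    rw [e] at h
    simpa using h
  exact ⟨hxconv, hyconv⟩
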